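/- Let n ∈ ℕ and let A, B be real matrices of sizes n×n and n×R. Suppose V : ℝ → Matrix(n,n,ℝ) is differentiable and satisfies V'(t) = A · V(t) + V(t) · Aᵀ + B·Bᵀ for all t ≥ 0, and V* ∈ Matrix(n,n,ℝ) satisfies A · V* + V* · Aᵀ + B·Bᵀ = 0. Then for all t ≥ 0, ‖V(t) − V*‖₂ ≤ ‖exp(tA)‖₂² · ‖V(0) − V*‖₂. -/

import Mathlib

set_option maxHeartbeats 1000000
set_option synthInstance.maxHeartbeats 400000

open Matrix

/-- The spectral norm (`2`-norm) of a real square matrix: its operator norm as a linear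
map between Euclidean (`ℓ²`) spaces. -/
noncomputable def specNorm {n : ℕ} (M : Matrix (Fin n) (Fin n) ℝ) : ℝ :=
  ‖Matrix.toEuclideanCLM (𝕜 := ℝ) M‖

lemma specNorm_nonneg {n : ℕ} (M : Matrix (Fin n) (Fin n) ℝ) : 0 ≤ specNorm M :=
  norm_nonneg _

lemma specNorm_mul_le {n : ℕ} (M N : Matrix (Fin n) (Fin n) ℝ) :
    specNorm (M * N) ≤ specNorm M * specNorm N := by
  unfold specNorm
  rw [_root_.map_mul]
  exact norm_mul_le _ _

lemma specNorm_transpose {n : ℕ} (M : Matrix (Fin n) (Fin n) ℝ) :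
    specNorm Mᵀ = specNorm M := by
  have h : Mᵀ = star M := by
    rw [Matrix.star_eq_conjTranspose, Matrix.conjTranspose_eq_transpose_of_trivial]
  rw [h]
  unfold specNorm
  rw [map_star, ContinuousLinearMap.star_eq_adjoint]
  exact ContinuousLinearMap.adjoint.norm_map (Matrix.toEuclideanCLM (𝕜 := ℝ) M)

section Key

open NormedSpace

attribute [local instance] Matrix.linftyOpNormedAddCommGroup Matrix.linftyOpNormedRing
  Matrix.linftyOpNormedAlgebra Matrix.linftyOpNormedSpace

/-- Entrywise derivatives give a matrix-valued derivative. -/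
lemma hasDerivAt_of_entries {n m : ℕ} {f : ℝ → Matrix (Fin n) (Fin m) ℝ}
    {f' : Matrix (Fin n) (Fin m) ℝ} {t : ℝ}
    (h : ∀ i j, HasDerivAt (fun s => f s i j) (f' i j) t) :
    HasDerivAt f f' t := by
  have hfun : f = fun s => ∑ i : Fin n, ∑ j : Fin m,
      (f s i j) • Matrix.single i j (1 : ℝ) := by
    funext s
    simpa [Matrix.smul_single] using Matrix.matrix_eq_sum_single (f s)
  have hval : f' = ∑ i : Fin n, ∑ j : Fin m, (f' i j) • Matrix.single i j (1 : ℝ) := by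
    simpa [Matrix.smul_single] using Matrix.matrix_eq_sum_single f'
  rw [hfun, hval]
  exact HasDerivAt.fun_sum fun i _ => HasDerivAt.fun_sum fun j _ => (h i j).smul_const (Matrix.single i j (1 : ℝ))

/-- Key identity: a solution of `W' = A W + W Aᵀ` is `exp(tA) W(0) exp(tAᵀ)`. -/
lemma lyapunov_key {n : ℕ} (A : Matrix (Fin n) (Fin n) ℝ) (W : ℝ → Matrix (Fin n) (Fin n) ℝ)
    (hW : ∀ s : ℝ, 0 ≤ s → HasDerivAt W (A * W s + W s * Aᵀ) s) (t : ℝ) (ht : 0 ≤ t) :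
    W t = exp (t • A) * W 0 * exp (t • Aᵀ) := by
  set E : ℝ → Matrix (Fin n) (Fin n) ℝ := fun s => exp ((t - s) • A) with hE
  set F : ℝ → Matrix (Fin n) (Fin n) ℝ := fun s => exp ((t - s) • Aᵀ) with hF
  have hEd : ∀ s : ℝ, HasDerivAt E (-(E s * A)) s := by
    intro s
    have h1 : HasDerivAt (fun u : ℝ => exp (u • A)) (exp ((t - s) • A) * A) (t - s) :=
      hasDerivAt_exp_smul_const A (t - s)
    have h2 : HasDerivAt (fun u : ℝ => t - u) (-1 : ℝ) s := by
      simpa using ((hasDerivAt_id s).const_sub t)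
    have := HasDerivAt.scomp s h1 h2
    simp only [neg_smul, one_smul] at this
    exact this
  have hFd : ∀ s : ℝ, HasDerivAt F (-(Aᵀ * F s)) s := by
    intro s
    have h1 : HasDerivAt (fun u : ℝ => exp (u • Aᵀ)) (Aᵀ * exp ((t - s) • Aᵀ)) (t - s) :=
      hasDerivAt_exp_smul_const' Aᵀ (t - s)
    have h2 : HasDerivAt (fun u : ℝ => t - u) (-1 : ℝ) s := by
      simpa using ((hasDerivAt_id s).const_sub t)
    have := HasDerivAt.scomp s h1 h2
    simp only [neg_smul, one_smul] at this
    exact this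
  set G : ℝ → Matrix (Fin n) (Fin n) ℝ := fun s => E s * W s * F s with hG
  have hGd : ∀ s : ℝ, 0 ≤ s → HasDerivAt G 0 s := by
    intro s hs
    have h := (((hEd s).mul (hW s hs)).mul (hFd s))
    refine HasDerivAt.congr_deriv h ?_
    simp only [Pi.mul_apply]
    noncomm_ring
  have hconst : G t = G 0 := by
    have := constant_of_has_deriv_right_zero
      (f := G) (a := 0) (b := t)
      (fun s hs => (hGd s hs.1).continuousAt.continuousWithinAt)
      (fun s hs => (hGd s hs.1).hasDerivWithinAt)
    exact this t ⟨ht, le_refl t⟩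
  have hGt : G t = W t := by
    simp [hG, hE, hF, exp_zero]
  have hG0 : G 0 = exp (t • A) * W 0 * exp (t • Aᵀ) := by
    simp [hG, hE, hF]
  rw [← hGt, hconst, hG0]

/-- Solution formula for the shifted Lyapunov ODE. -/
lemma lyapunov_solution {n R : ℕ}
    (A : Matrix (Fin n) (Fin n) ℝ) (B : Matrix (Fin n) (Fin R) ℝ)
    (V : ℝ → Matrix (Fin n) (Fin n) ℝ) (Vstar : Matrix (Fin n) (Fin n) ℝ)
    (hV : ∀ t : ℝ, 0 ≤ t → ∀ i j,
      HasDerivAt (fun s : ℝ => V s i j) ((A * V t + V t * Aᵀ + B * Bᵀ) i j) t)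
    (hVstar : A * Vstar + Vstar * Aᵀ + B * Bᵀ = 0) (t : ℝ) (ht : 0 ≤ t) :
    V t - Vstar = exp (t • A) * (V 0 - Vstar) * exp (t • Aᵀ) := by
  set W : ℝ → Matrix (Fin n) (Fin n) ℝ := fun s => V s - Vstar with hWdef
  have hWd : ∀ s : ℝ, 0 ≤ s → HasDerivAt W (A * W s + W s * Aᵀ) s := by
    intro s hs
    apply hasDerivAt_of_entries
    intro i j
    have h1 := (hV s hs i j).sub_const (Vstar i j)
    have heq : (A * V s + V s * Aᵀ + B * Bᵀ) i j = (A * W s + W s * Aᵀ) i j := by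
      have h2 : A * W s + W s * Aᵀ =
          (A * V s + V s * Aᵀ + B * Bᵀ) - (A * Vstar + Vstar * Aᵀ + B * Bᵀ) := by
        simp only [hWdef]
        simp [Matrix.mul_sub, Matrix.sub_mul]
        noncomm_ring
      rw [h2, hVstar, sub_zero]
    rw [heq] at h1
    exact h1
  exact lyapunov_key A W hWd t ht

end Key

/-- If `V` solves the Lyapunov differential equation
`V'(t) = A V(t) + V(t) Aᵀ + B Bᵀ` for all `t ≥ 0` and `V*` is a stationary solution, then
`‖V(t) - V*‖₂ ≤ ‖exp(tA)‖₂² ‖V(0) - V*‖₂` for all `t ≥ 0`. -/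
theorem lyapunov_ode_norm_estimate (n R : ℕ)
    (A : Matrix (Fin n) (Fin n) ℝ) (B : Matrix (Fin n) (Fin R) ℝ)
    (V : ℝ → Matrix (Fin n) (Fin n) ℝ) (Vstar : Matrix (Fin n) (Fin n) ℝ)
    (hV : ∀ t : ℝ, 0 ≤ t → ∀ i j,
      HasDerivAt (fun s : ℝ => V s i j) ((A * V t + V t * Aᵀ + B * Bᵀ) i j) t)
    (hVstar : A * Vstar + Vstar * Aᵀ + B * Bᵀ = 0) :
    ∀ t : ℝ, 0 ≤ t →
      specNorm (V t - Vstar) ≤ specNorm (NormedSpace.exp (t • A)) ^ 2 * specNorm (V 0 - Vstar) := by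
  intro t ht
  have hkey := lyapunov_solution A B V Vstar hV hVstar t ht
  have htrans : NormedSpace.exp (t • Aᵀ) = (NormedSpace.exp (t • A))ᵀ := by
    rw [← Matrix.transpose_smul, Matrix.exp_transpose]
  rw [htrans] at hkey
  rw [hkey]
  have h1 : specNorm (NormedSpace.exp (t • A) * (V 0 - Vstar) * (NormedSpace.exp (t • A))ᵀ) ≤
      specNorm (NormedSpace.exp (t • A) * (V 0 - Vstar)) *
        specNorm ((NormedSpace.exp (t • A))ᵀ) := specNorm_mul_le _ _
  have h2 : specNorm (NormedSpace.exp (t • A) * (V 0 - Vstar)) ≤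
      specNorm (NormedSpace.exp (t • A)) * specNorm (V 0 - Vstar) := specNorm_mul_le _ _
  have h3 : specNorm ((NormedSpace.exp (t • A))ᵀ) = specNorm (NormedSpace.exp (t • A)) :=
    specNorm_transpose _
  calc specNorm (NormedSpace.exp (t • A) * (V 0 - Vstar) * (NormedSpace.exp (t • A))ᵀ)
      ≤ specNorm (NormedSpace.exp (t • A) * (V 0 - Vstar)) *
        specNorm ((NormedSpace.exp (t • A))ᵀ) := h1
    _ ≤ (specNorm (NormedSpace.exp (t • A)) * specNorm (V 0 - Vstar)) *
        specNorm (NormedSpace.exp (t • A)) := by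
        rw [h3]
        exact mul_le_mul_of_nonneg_right h2 (specNorm_nonneg _)
    _ = specNorm (NormedSpace.exp (t • A)) ^ 2 * specNorm (V 0 - Vstar) := by ring
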